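/- In a Boolean algebra with a total transitive relation ≿ satisfying monotonicity and quasi-additivity, for pairwise incompatible α, β, γ, δ: if (α ∨ β) ≿ (γ ∨ δ) and δ ≿ β, then α ≿ γ. -/
import Mathlib


theorem stmt_6 {B : Type*} [BooleanAlgebra B] (r : B → B → Prop)
    (htrans : ∀ x y z, r x y → r y z → r x z)
    (htot : ∀ x y, r x y ∨ r y x)
    (hdist : ∀ x y, y ≤ x → r x y)
    (hquasi : ∀ x y, r x y ↔ r (x ⊓ yᶜ) (y ⊓ xᶜ))
    (a b c d : B)
    (hpair : ([a, b, c, d] : List B).Pairwise fun x y => x ⊓ y = ⊥)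
    (h1 : r (a ⊔ b) (c ⊔ d)) (h2 : r d b) :
    r a c := by
  simp only [List.pairwise_cons, List.mem_cons, List.not_mem_nil] at hpair
  have hab : a ⊓ b = ⊥ := hpair.1 b (by simp)
  have hac : a ⊓ c = ⊥ := hpair.1 c (by simp)
  have had : a ⊓ d = ⊥ := hpair.1 d (by simp)
  have hcd : c ⊓ d = ⊥ := hpair.2.2.1 d (by simp)
  have hbd : b ⊓ d = ⊥ := hpair.2.1 d (by simp)
  -- key lemma: cancel a common disjoint summand
  have key : ∀ u v w : B, u ⊓ w = ⊥ → v ⊓ w = ⊥ → (r (u ⊔ w) (v ⊔ w) ↔ r u v) := by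
    intro u v w hu hv
    have huw : u ⊓ wᶜ = u := inf_eq_left.mpr (le_compl_iff_disjoint_right.mpr
      (disjoint_iff.mpr hu))
    have hvw : v ⊓ wᶜ = v := inf_eq_left.mpr (le_compl_iff_disjoint_right.mpr
      (disjoint_iff.mpr hv))
    have e : ∀ x y : B, x ⊓ wᶜ = x → y ⊓ wᶜ = y → (x ⊔ w) ⊓ (y ⊔ w)ᶜ = x ⊓ yᶜ := by
      intro x y hx hy
      rw [compl_sup, inf_sup_right]
      have : w ⊓ (yᶜ ⊓ wᶜ) = ⊥ := by
        rw [inf_comm yᶜ wᶜ, ← inf_assoc, inf_compl_eq_bot, bot_inf_eq]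
      rw [this, sup_bot_eq, inf_comm yᶜ wᶜ, ← inf_assoc, hx]
    rw [hquasi (u ⊔ w) (v ⊔ w), e u v huw hvw, e v u hvw huw, ← hquasi u v]
  have step1 : r (d ⊔ a) (b ⊔ a) := (key d b a (by rwa [inf_comm]) (by rwa [inf_comm])).mpr h2
  have step1' : r (a ⊔ d) (a ⊔ b) := by rwa [sup_comm d a, sup_comm b a] at step1
  have step2 : r (a ⊔ d) (c ⊔ d) := htrans _ _ _ step1' h1
  exact (key a c d had hcd).mp step2
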